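/- A Borel measure $\mu$ on the set $\Omega(d)$ of rank-one projections on $\mathbb{C}^d$ is uniquely determined by the sequence of its tensor moments $M_n(\mu) = \int P^{\otimes n}\, d\mu(P)$ for $n = 0, 1, 2, \dots$. That is, if two finite Borel measures $\mu, \nu$ on $\Omega(d)$ satisfy $M_n(\mu) = M_n(\nu)$ for all $n$, then $\mu = \nu$. -/

import Mathlib

open Matrix MeasureTheory
open scoped NNReal ENNReal

/-- The set of rank-one projections `|φ⟩⟨φ|` (with `φ` a unit vector) on `ℂ^d`. -/
def OmegaSet (d : ℕ) : Set (Matrix (Fin d) (Fin d) ℂ) :=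
  {P | ∃ φ : Fin d → ℂ, (∑ i, Complex.normSq (φ i)) = 1 ∧ P = vecMulVec φ (star φ)}

/--  carries its Borel σ-algebra. -/
noncomputable instance (d : ℕ) : MeasurableSpace ↥(OmegaSet d) := borel _

instance (d : ℕ) : BorelSpace ↥(OmegaSet d) := ⟨rfl⟩

instance (d : ℕ) : TopologicalSpace.PseudoMetrizableSpace (Matrix (Fin d) (Fin d) ℂ) :=
  inferInstanceAs (TopologicalSpace.PseudoMetrizableSpace (Fin d → Fin d → ℂ))

lemma isCompact_omegaSet (d : ℕ) : IsCompact (OmegaSet d) := by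
  have himg : OmegaSet d =
      (fun φ : Fin d → ℂ => vecMulVec φ (star φ)) ''
        {φ : Fin d → ℂ | (∑ i, Complex.normSq (φ i)) = 1} := by
    ext P
    constructor
    · rintro ⟨φ, h1, h2⟩; exact ⟨φ, h1, h2.symm⟩
    · rintro ⟨φ, h1, h2⟩; exact ⟨φ, h1, h2.symm⟩
  rw [himg]
  apply IsCompact.image
  · apply Metric.isCompact_of_isClosed_isBounded
    · exact isClosed_eq (continuous_finset_sum _ fun i _ => Complex.continuous_normSq.comp (continuous_apply i)) continuous_const
    · apply Bornology.IsBounded.subset (Metric.isBounded_closedBall (x := (0 : Fin d → ℂ)) (r := 1))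
      intro φ hφ
      simp only [Metric.mem_closedBall, dist_zero_right]
      rw [pi_norm_le_iff_of_nonneg (by norm_num)]
      intro i
      have h1 : Complex.normSq (φ i) ≤ 1 := by
        rw [← hφ]
        exact Finset.single_le_sum (fun j _ => Complex.normSq_nonneg (φ j)) (Finset.mem_univ i)
      have h2 : ‖φ i‖ ^ 2 ≤ 1 := by
        rwa [Complex.sq_norm]
      exact (pow_le_one_iff_of_nonneg (norm_nonneg _) two_ne_zero).mp h2
  · apply continuous_matrix
    intro i j
    simp only [vecMulVec_apply, Pi.star_apply]
    exact (continuous_apply i).mul (continuous_star.comp (continuous_apply j))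

instance (d : ℕ) : CompactSpace ↥(OmegaSet d) :=
  isCompact_iff_compactSpace.mp (isCompact_omegaSet d)

lemma omegaSet_conj_entry {d : ℕ} {P : Matrix (Fin d) (Fin d) ℂ} (hP : P ∈ OmegaSet d)
    (i j : Fin d) : (starRingEnd ℂ) (P i j) = P j i := by
  obtain ⟨φ, -, rfl⟩ := hP
  simp only [vecMulVec_apply, Pi.star_apply, Complex.star_def, _root_.map_mul,
    Complex.conj_conj]
  ring

/-- A finite Borel measure on `Ω(d)` is uniquely determined by its tensor moments
`∫ P^{⊗n} dμ(P)`, `n = 0, 1, 2, …` (the integrals are taken entrywise). -/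
theorem stmt_15 (d : ℕ) (μ ν : Measure ↥(OmegaSet d))
    [IsFiniteMeasure μ] [IsFiniteMeasure ν]
    (hmom : ∀ (n : ℕ) (F G : Fin n → Fin d),
      ∫ P, (∏ i, (P : Matrix (Fin d) (Fin d) ℂ) (F i) (G i)) ∂μ
        = ∫ P, (∏ i, (P : Matrix (Fin d) (Fin d) ℂ) (F i) (G i)) ∂ν) :
    μ = ν := by
  set Ω := ↥(OmegaSet d) with hΩ
  -- every continuous function is integrable
  have hint : ∀ (g : C(Ω, ℂ)) (κ : Measure Ω) [IsFiniteMeasure κ], Integrable (⇑g) κ := by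
    intro g κ _
    exact (BoundedContinuousFunction.mkOfCompact g).integrable κ
  -- the coordinate functions
  have hcont : ∀ i j : Fin d, Continuous fun P : Ω => (P : Matrix (Fin d) (Fin d) ℂ) i j :=
    fun i j => continuous_subtype_val.matrix_elem i j
  set c : Fin d → Fin d → C(Ω, ℂ) :=
    fun i j => ⟨fun P => (P : Matrix (Fin d) (Fin d) ℂ) i j, hcont i j⟩ with hc
  set S : Set C(Ω, ℂ) := {f | ∃ i j, f = c i j} with hS
  -- star-closedness
  have hcs : ∀ i j, star (c i j) = c j i := by
    intro i j
    ext P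
    exact omegaSet_conj_entry P.2 i j
  have hSstar : S ∪ star S = S := by
    apply Set.union_eq_self_of_subset_right
    rintro f hf
    rw [Set.mem_star] at hf
    obtain ⟨i, j, hij⟩ := hf
    exact ⟨j, i, by rw [← hcs, ← hij, star_star]⟩
  -- the key claim: integrals of all continuous ℂ-valued functions agree
  have key : ∀ f : C(Ω, ℂ), ∫ P, f P ∂μ = ∫ P, f P ∂ν := by
    -- the set of functions on which the integrals agree is closed
    have hIcont : ∀ (κ : Measure Ω) [IsFiniteMeasure κ],
        Continuous fun f : C(Ω, ℂ) => ∫ P, f P ∂κ := by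
      intro κ _
      apply LipschitzWith.continuous (K := (κ Set.univ).toNNReal)
      apply LipschitzWith.of_dist_le_mul
      intro f g
      rw [dist_eq_norm, dist_eq_norm]
      have h1 : ∫ P, f P ∂κ - ∫ P, g P ∂κ = ∫ P, (f - g) P ∂κ := by
        simp only [ContinuousMap.sub_apply]
        rw [integral_sub (hint f κ) (hint g κ)]
      rw [h1]
      have h2 := BoundedContinuousFunction.norm_integral_le_mul_norm κ
        (BoundedContinuousFunction.mkOfCompact (f - g))
      rw [BoundedContinuousFunction.norm_mkOfCompact] at h2
      simpa [Measure.real, ENNReal.coe_toNNReal_eq_toReal] using h2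
    have hclosed : IsClosed {f : C(Ω, ℂ) | ∫ P, f P ∂μ = ∫ P, f P ∂ν} :=
      isClosed_eq (hIcont μ) (hIcont ν)
    -- the star subalgebra generated by the coordinates separates points
    have hsep : (StarAlgebra.adjoin ℂ S).SeparatesPoints := by
      intro x y hxy
      have hxy' : (x : Matrix (Fin d) (Fin d) ℂ) ≠ y := fun h => hxy (Subtype.ext h)
      have : ∃ i j, (x : Matrix (Fin d) (Fin d) ℂ) i j ≠ (y : Matrix (Fin d) (Fin d) ℂ) i j := by
        by_contra h
        push_neg at h
        exact hxy' (by ext i j; exact h i j)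
      obtain ⟨i, j, hij⟩ := this
      exact ⟨c i j, ⟨c i j, StarAlgebra.subset_adjoin ℂ S ⟨i, j, rfl⟩, rfl⟩, hij⟩
    have htop := ContinuousMap.starSubalgebra_topologicalClosure_eq_top_of_separatesPoints
      (StarAlgebra.adjoin ℂ S) hsep
    -- the integrals agree on the subalgebra
    have hsub : (StarAlgebra.adjoin ℂ S : Set C(Ω, ℂ)) ⊆
        {f : C(Ω, ℂ) | ∫ P, f P ∂μ = ∫ P, f P ∂ν} := by
      intro f hf
      have hf' : f ∈ Algebra.adjoin ℂ S := by
        have : f ∈ Algebra.adjoin ℂ (S ∪ star S) := hf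
        rwa [hSstar] at this
      have hspan : f ∈ Submodule.span ℂ ((Submonoid.closure S : Submonoid C(Ω, ℂ)) :
          Set C(Ω, ℂ)) := by
        rw [← Algebra.adjoin_eq_span]
        exact hf'
      -- elements of the monoid closure are exactly the moment functions
      have hmono : ∀ g ∈ Submonoid.closure S,
          ∃ (n : ℕ) (F G : Fin n → Fin d), ⇑g =
            fun P : Ω => ∏ i, (P : Matrix (Fin d) (Fin d) ℂ) (F i) (G i) := by
        intro g hg
        induction hg using Submonoid.closure_induction with
        | mem f hf =>
          obtain ⟨i, j, rfl⟩ := hf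
          exact ⟨1, fun _ => i, fun _ => j, by funext P; simp [hc]⟩
        | one => exact ⟨0, Fin.elim0, Fin.elim0, by funext P; simp⟩
        | mul a b _ _ ha hb =>
          obtain ⟨n, F, G, hF⟩ := ha
          obtain ⟨m, F', G', hF'⟩ := hb
          refine ⟨n + m, Fin.append F F', Fin.append G G', ?_⟩
          funext P
          simp only [ContinuousMap.coe_mul, Pi.mul_apply, hF, hF']
          rw [Fin.prod_univ_add]
          congr 1
          · exact Finset.prod_congr rfl fun i _ => by rw [Fin.append_left, Fin.append_left]
          · exact Finset.prod_congr rfl fun i _ => by rw [Fin.append_right, Fin.append_right]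
      clear hf hf'
      -- span induction
      induction hspan using Submodule.span_induction with
      | mem g hg =>
        obtain ⟨n, F, G, hg'⟩ := hmono g hg
        show ∫ P, g P ∂μ = ∫ P, g P ∂ν
        rw [hg']
        exact hmom n F G
      | zero => simp
      | add a b ha hb iha ihb =>
        show ∫ P, (a + b) P ∂μ = ∫ P, (a + b) P ∂ν
        simp only [ContinuousMap.add_apply]
        rw [integral_add (hint a μ) (hint b μ), integral_add (hint a ν) (hint b ν)]
        rw [iha, ihb]
      | smul r a ha iha =>
        show ∫ P, (r • a) P ∂μ = ∫ P, (r • a) P ∂ν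
        simp only [ContinuousMap.smul_apply]
        rw [integral_smul, integral_smul]
        rw [iha]
    intro f
    have hf : f ∈ (StarAlgebra.adjoin ℂ S).topologicalClosure := by
      rw [htop]; trivial
    have hf' : f ∈ closure ((StarAlgebra.adjoin ℂ S : Set C(Ω, ℂ))) := hf
    exact closure_minimal hsub hclosed hf'
  -- conclude via ℝ≥0-valued bounded continuous functions
  apply ext_of_forall_lintegral_eq_of_IsFiniteMeasure
  intro f
  have hμ : ∫⁻ x, (f x : ℝ≥0∞) ∂μ ≠ ⊤ :=
    (BoundedContinuousFunction.lintegral_lt_top_of_nnreal μ f).ne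
  have hν : ∫⁻ x, (f x : ℝ≥0∞) ∂ν ≠ ⊤ :=
    (BoundedContinuousFunction.lintegral_lt_top_of_nnreal ν f).ne
  rw [← ENNReal.toReal_eq_toReal_iff' hμ hν,
    BoundedContinuousFunction.toReal_lintegral_coe_eq_integral,
    BoundedContinuousFunction.toReal_lintegral_coe_eq_integral]
  have := key ⟨fun P => (RCLike.ofReal (K := ℂ) (f P : ℝ)),
    RCLike.continuous_ofReal.comp (NNReal.continuous_coe.comp f.continuous)⟩
  simp only [ContinuousMap.coe_mk] at this
  rw [integral_ofReal (f := fun x : ↥(OmegaSet d) => (f x : ℝ)) (μ := μ),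
    integral_ofReal (f := fun x : ↥(OmegaSet d) => (f x : ℝ)) (μ := ν)] at this
  exact RCLike.ofReal_inj.mp this
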